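/- Consider the upper triangular half of an (n−2)×(n−2) grid (cells (r,c) with r + c ≤ n−1, say). If at least n−3 full rows and columns in total are colored black, then the number of black cells in the triangular region is at least (n²−4n+3)/4 if n is odd, and at least (n²−4n+4)/4 if n is even; consequently the number of uncolored cells is at most ⌊n/2⌋·⌊(n−1)/2⌋. -/
import Mathlib

open Finset

lemma tri_card (m : ℕ) :
    2 * ((Finset.Icc 1 m ×ˢ Finset.Icc 1 m).filter (fun p => p.1 + p.2 ≤ m + 1)).card
      = m * (m + 1) := by
  have hset : (Finset.Icc 1 m ×ˢ Finset.Icc 1 m).filter (fun p => p.1 + p.2 ≤ m + 1)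
      = (Finset.Icc 1 m).biUnion (fun r => {r} ×ˢ Finset.Icc 1 (m + 1 - r)) := by
    ext p
    simp only [mem_filter, mem_product, mem_Icc, mem_biUnion, mem_singleton]
    constructor
    · rintro ⟨⟨⟨h1, h2⟩, h3, h4⟩, h5⟩
      exact ⟨p.1, ⟨h1, h2⟩, rfl, by omega⟩
    · rintro ⟨r, ⟨hr1, hr2⟩, rfl, h3, h4⟩
      exact ⟨⟨⟨hr1, hr2⟩, h3, by omega⟩, by omega⟩
  rw [hset, Finset.card_biUnion]
  · have : ∀ r ∈ Finset.Icc 1 m, ({r} ×ˢ Finset.Icc 1 (m + 1 - r)).card = m + 1 - r := by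
      intro r hr
      simp [Finset.card_product, Nat.card_Icc]
    rw [Finset.sum_congr rfl this]
    have h1 : ∑ r ∈ Finset.Icc 1 m, (m + 1 - r) = ∑ i ∈ Finset.range m, (m - i) := by
      rw [show Finset.Icc 1 m = Finset.Ico 1 (m+1) by rfl, Finset.sum_Ico_eq_sum_range]
      apply Finset.sum_congr rfl
      intro i _; omega
    rw [h1]
    have h2 : ∑ i ∈ Finset.range m, (m - i) = ∑ i ∈ Finset.range m, (i + 1) := by
      rw [← Finset.sum_range_reflect]
      apply Finset.sum_congr rfl
      intro i hi
      simp only [Finset.mem_range] at hi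
      omega
    rw [h2]
    have h3 : (∑ i ∈ Finset.range (m + 1), i) * 2 = (m + 1) * m := by
      simpa using Finset.sum_range_id_mul_two (m + 1)
    rw [Finset.sum_range_succ'] at h3
    linarith
  · intro x hx y hy hxy
    simp only [Finset.disjoint_left, mem_product, mem_singleton]
    rintro p ⟨h1, -⟩ ⟨h2, -⟩
    exact hxy (h1 ▸ h2)

theorem chessboard_black_cells (n : ℕ) (hn : 3 ≤ n)
    (R C : Finset ℕ) (hR : R ⊆ Finset.Icc 1 (n - 2)) (hC : C ⊆ Finset.Icc 1 (n - 2))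
    (hcard : n - 3 ≤ R.card + C.card) :
    (Odd n →
        n ^ 2 + 3 ≤ 4 * (((Finset.Icc 1 (n - 2) ×ˢ Finset.Icc 1 (n - 2)).filter
          (fun p => p.1 + p.2 ≤ n - 1 ∧ (p.1 ∈ R ∨ p.2 ∈ C))).card) + 4 * n) ∧
    (Even n →
        n ^ 2 + 4 ≤ 4 * (((Finset.Icc 1 (n - 2) ×ˢ Finset.Icc 1 (n - 2)).filter
          (fun p => p.1 + p.2 ≤ n - 1 ∧ (p.1 ∈ R ∨ p.2 ∈ C))).card) + 4 * n) ∧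
    ((Finset.Icc 1 (n - 2) ×ˢ Finset.Icc 1 (n - 2)).filter
        (fun p => p.1 + p.2 ≤ n - 1 ∧ p.1 ∉ R ∧ p.2 ∉ C)).card ≤
      (n / 2) * ((n - 1) / 2) := by
  set m := n - 2 with hm
  have hn1 : n - 1 = m + 1 := by omega
  rw [hn1]
  set S := Finset.Icc 1 m ×ˢ Finset.Icc 1 m with hS
  set T := S.filter (fun p => p.1 + p.2 ≤ m + 1) with hT
  set B := S.filter (fun p => p.1 + p.2 ≤ m + 1 ∧ (p.1 ∈ R ∨ p.2 ∈ C)) with hB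
  set U := S.filter (fun p => p.1 + p.2 ≤ m + 1 ∧ p.1 ∉ R ∧ p.2 ∉ C) with hU
  have hBU : B.card + U.card = T.card := by
    have hBeq : B = T.filter (fun p => p.1 ∈ R ∨ p.2 ∈ C) := by
      rw [hB, hT, Finset.filter_filter]
    have hUeq : U = T.filter (fun p => ¬ (p.1 ∈ R ∨ p.2 ∈ C)) := by
      rw [hU, hT, Finset.filter_filter]
      apply Finset.filter_congr
      intro p _
      constructor
      · rintro ⟨h1, h2, h3⟩; exact ⟨h1, by tauto⟩
      · rintro ⟨h1, h2⟩; exact ⟨h1, by tauto⟩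
    rw [hBeq, hUeq, Finset.card_filter_add_card_filter_not]
  have hTcard : 2 * T.card = m * (m + 1) := tri_card m
  have hRcard : R.card ≤ m := by
    calc R.card ≤ (Finset.Icc 1 m).card := Finset.card_le_card hR
    _ = m := by simp
  have hCcard : C.card ≤ m := by
    calc C.card ≤ (Finset.Icc 1 m).card := Finset.card_le_card hC
    _ = m := by simp
  have hUsub : U ⊆ ((Finset.Icc 1 m).filter (fun r => r ∉ R)) ×ˢ
      ((Finset.Icc 1 m).filter (fun c => c ∉ C)) := by
    intro p hp
    rw [hU, Finset.mem_filter, hS, Finset.mem_product] at hp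
    obtain ⟨⟨h1, h2⟩, _, h3, h4⟩ := hp
    rw [Finset.mem_product, Finset.mem_filter, Finset.mem_filter]
    exact ⟨⟨h1, h3⟩, h2, h4⟩
  have ha : ((Finset.Icc 1 m).filter (fun r => r ∉ R)).card = m - R.card := by
    rw [Finset.filter_not, Finset.card_sdiff_of_subset (Finset.filter_subset _ _)]
    congr 1
    · simp
    · rw [Finset.filter_mem_eq_inter, Finset.inter_eq_right.mpr hR]
  have hb : ((Finset.Icc 1 m).filter (fun c => c ∉ C)).card = m - C.card := by
    rw [Finset.filter_not, Finset.card_sdiff_of_subset (Finset.filter_subset _ _)]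
    congr 1
    · simp
    · rw [Finset.filter_mem_eq_inter, Finset.inter_eq_right.mpr hC]
  have hUle : U.card ≤ (m - R.card) * (m - C.card) := by
    calc U.card ≤ _ := Finset.card_le_card hUsub
    _ = (m - R.card) * (m - C.card) := by rw [Finset.card_product, ha, hb]
  set a := m - R.card with haa
  set b := m - C.card with hbb
  have hab : a + b ≤ m + 1 := by omega
  have h4U : 4 * U.card ≤ (m + 1) ^ 2 := by
    have key : 4 * (a * b) ≤ (a + b) ^ 2 := by nlinarith [two_mul_le_add_sq a b]
    have h2 : (a + b) ^ 2 ≤ (m + 1) ^ 2 := Nat.pow_le_pow_left hab 2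
    omega
  have hnm : n = m + 2 := by omega
  have e0 : n ^ 2 = m ^ 2 + 4 * m + 4 := by rw [hnm]; ring
  have e1 : (m + 1) ^ 2 = m ^ 2 + 2 * m + 1 := by ring
  have e2 : m * (m + 1) = m ^ 2 + m := by ring
  refine ⟨?_, ?_, ?_⟩
  · intro _
    omega
  · intro he
    have hmo : ∃ k, m = 2 * k := by
      rcases he with ⟨k, hk⟩
      exact ⟨k - 1, by omega⟩
    obtain ⟨k, hk⟩ := hmo
    have e3 : (m + 1) ^ 2 = 4 * (k * k) + 4 * k + 1 := by rw [hk]; ring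
    omega
  · rcases Nat.even_or_odd m with ⟨k, hk⟩ | ⟨k, hk⟩
    · have h1 : n / 2 = k + 1 := by omega
      have h2 : (m + 1) / 2 = k := by omega
      rw [h1, h2]
      have e3 : (m + 1) ^ 2 = 4 * ((k + 1) * k) + 1 := by rw [hk]; ring
      omega
    · have h1 : n / 2 = k + 1 := by omega
      have h2 : (m + 1) / 2 = k + 1 := by omega
      rw [h1, h2]
      have e3 : (m + 1) ^ 2 = 4 * ((k + 1) * (k + 1)) := by rw [hk]; ring
      omega
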